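/- Let G be a finite group and φ an endomorphism of G. Then for each k ≥ 0, |ker^(k)(φ) ∩ im(φ)| = a_2 · a_3 ⋯ a_{k+1}, where a_j = [ker^(j)(φ) : ker^(j−1)(φ)]. -/

import Mathlib

/-- The index `a_j = [ker^(j)(φ) : ker^(j-1)(φ)]` of consecutive iterated kernels. -/
noncomputable def kerIdx {G : Type*} [Group G] (φ : Monoid.End G) (j : ℕ) : ℕ :=
  (MonoidHom.ker (φ ^ (j - 1))).relIndex (MonoidHom.ker (φ ^ j))

lemma ker_le_ker_pow {G : Type*} [Group G] (φ : Monoid.End G) {m n : ℕ} (h : m ≤ n) :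
    MonoidHom.ker (φ ^ m) ≤ MonoidHom.ker (φ ^ n) := by
  intro g hg
  obtain ⟨c, rfl⟩ := Nat.exists_eq_add_of_le h
  have : (φ ^ (m + c)) g = (φ ^ c) ((φ ^ m) g) := by
    rw [add_comm, pow_add]; rfl
  change (φ ^ m) g = 1 at hg
  change (φ ^ (m + c)) g = 1
  rw [this, hg, map_one]

lemma prod_kerIdx {G : Type*} [Group G] [Finite G] (φ : Monoid.End G) (k : ℕ) :
    (∏ j ∈ Finset.Icc 2 (k + 1), kerIdx φ j) * Nat.card (MonoidHom.ker φ) =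
      Nat.card (MonoidHom.ker (φ ^ (k + 1))) := by
  induction k with
  | zero => simp [pow_one]
  | succ k ih =>
    rw [show k + 1 + 1 = (k + 1) + 1 from rfl, Finset.prod_Icc_succ_top (by omega),
      mul_right_comm, ih]
    have hle : MonoidHom.ker (φ ^ (k + 1)) ≤ MonoidHom.ker (φ ^ (k + 2)) :=
      ker_le_ker_pow φ (by omega)
    have := Subgroup.card_mul_index
      ((MonoidHom.ker (φ ^ (k + 1))).subgroupOf (MonoidHom.ker (φ ^ (k + 2))))
    have hcard : Nat.card
        ((MonoidHom.ker (φ ^ (k + 1))).subgroupOf (MonoidHom.ker (φ ^ (k + 2)))) =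
        Nat.card (MonoidHom.ker (φ ^ (k + 1))) :=
      Nat.card_congr (Subgroup.subgroupOfEquivOfLe hle).toEquiv
    have h2 : kerIdx φ (k + 2) =
        ((MonoidHom.ker (φ ^ (k + 1))).subgroupOf (MonoidHom.ker (φ ^ (k + 2)))).index := by
      simp [kerIdx, Subgroup.relIndex]
    rw [h2, mul_comm, ← hcard]
    rw [mul_comm]
    exact this

theorem card_ker_inter_image (G : Type*) [Group G] [Finite G] (φ : Monoid.End G)
    (k : ℕ) :
    Nat.card (((MonoidHom.ker (φ ^ k) : Set G) ∩ Set.range φ : Set G)) =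
      ∏ j ∈ Finset.Icc 2 (k + 1), kerIdx φ j := by
  set K : Subgroup G := MonoidHom.ker (φ ^ (k + 1))
  set ψ : K →* G := (φ : G →* G).comp K.subtype
  have hset : ((MonoidHom.ker (φ ^ k) : Set G) ∩ Set.range φ : Set G) =
      (MonoidHom.range ψ : Set G) := by
    ext x
    constructor
    · rintro ⟨hx, g, rfl⟩
      have hg : g ∈ K := by
        simp only [K, MonoidHom.mem_ker]
        have : (φ ^ (k + 1)) g = (φ ^ k) (φ g) := by rw [pow_succ]; rfl
        show (φ ^ (k + 1)) g = 1
        rw [this]; exact hx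
      exact ⟨⟨g, hg⟩, rfl⟩
    · rintro ⟨⟨g, hg⟩, rfl⟩
      refine ⟨?_, g, rfl⟩
      simp only [K, MonoidHom.mem_ker] at hg
      show (φ ^ k) (ψ ⟨g, _⟩) = 1
      have : (φ ^ k) (ψ ⟨g, hg⟩) = (φ ^ (k + 1)) g := by rw [pow_succ]; rfl
      rw [this]; exact hg
  have hkerψ : Nat.card (MonoidHom.ker ψ) = Nat.card (MonoidHom.ker φ) := by
    have hle : MonoidHom.ker φ ≤ K := by
      have := ker_le_ker_pow φ (show 1 ≤ k + 1 by omega)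
      rwa [pow_one] at this
    have : MonoidHom.ker ψ = (MonoidHom.ker φ).subgroupOf K := by
      ext ⟨g, hg⟩
      simp [ψ, MonoidHom.mem_ker, Subgroup.mem_subgroupOf]
      exact Iff.rfl
    rw [this]
    exact Nat.card_congr (Subgroup.subgroupOfEquivOfLe hle).toEquiv
  have hfirst : Nat.card (MonoidHom.range ψ) * Nat.card (MonoidHom.ker ψ) = Nat.card K := by
    rw [Subgroup.card_eq_card_quotient_mul_card_subgroup (MonoidHom.ker ψ),
      Nat.card_congr (QuotientGroup.quotientKerEquivRange ψ).toEquiv]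
  have hprod := prod_kerIdx φ k
  have hpos : 0 < Nat.card (MonoidHom.ker φ) := Nat.card_pos
  rw [hset]
  have : Nat.card (MonoidHom.range ψ : Set G) = Nat.card (MonoidHom.range ψ) := rfl
  rw [this]
  apply Nat.eq_of_mul_eq_mul_right hpos
  rw [hkerψ] at hfirst
  rw [hfirst, hprod]
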